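/- Let G be a group with |G| ≥ 3k + 1 for some integer k ≥ 1, let g₁, …, g_k be k distinct elements of G, and let X = G \ {g₁, …, g_k}. Then X is not a minimal left complement to any nonempty subset S of G: whenever X·S = G there exists x ∈ X with (X \ {x})·S = G. -/

import Mathlib

open Pointwise

theorem stmt_10 {G : Type*} [Group G] (k : ℕ) (hk : 1 ≤ k)
    (T : Finset G) (hT : T.card = k)
    (hG : (3 * k + 1 : Cardinal) ≤ Cardinal.mk G)
    (S : Set G) (hS : S.Nonempty)
    (hcomp : (Set.univ \ (T : Set G)) * S = Set.univ) :
    ∃ x ∈ Set.univ \ (T : Set G),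
      ((Set.univ \ (T : Set G)) \ {x}) * S = Set.univ := by
  set X : Set G := Set.univ \ (T : Set G) with hXdef
  by_contra hcon
  push_neg at hcon
  -- every element of X has a "witness" showing it cannot be removed
  have hwit : ∀ x ∈ X, ∃ g : G, ∀ s ∈ S, g * s⁻¹ ∈ (T : Set G) ∪ {x} := by
    intro x hx
    obtain ⟨g, hg⟩ := Set.ne_univ_iff_exists_notMem _ |>.mp (hcon x hx)
    refine ⟨g, fun s hs => ?_⟩
    by_contra h
    have hmem : g * s⁻¹ ∈ X \ {x} := by
      refine ⟨⟨Set.mem_univ _, fun hT' => h (Or.inl hT')⟩, fun heq => h (Or.inr heq)⟩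
    have : g ∈ (X \ {x}) * S := by
      have := Set.mul_mem_mul hmem hs
      simpa using this
    exact hg this
  choose! g hg using hwit
  -- injectivity of the witness map on X
  have hinj : ∀ x ∈ X, ∀ y ∈ X, g x = g y → x = y := by
    intro x hx y hy hxy
    have hgx : g x ∈ X * S := by rw [hcomp]; exact Set.mem_univ _
    obtain ⟨x₀, hx₀, s, hs, hmul⟩ := hgx
    have h1 : g x * s⁻¹ = x₀ := by rw [← hmul]; group
    have h2 : x₀ ∈ (T : Set G) ∪ {x} := h1 ▸ hg x hx s hs
    have h3 : x₀ ∈ (T : Set G) ∪ {y} := h1 ▸ (hxy ▸ hg y hy s hs)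
    have hx₀T : x₀ ∉ (T : Set G) := hx₀.2
    have e1 : x₀ = x := by rcases h2 with h | h; exact absurd h hx₀T; exact h
    have e2 : x₀ = y := by rcases h3 with h | h; exact absurd h hx₀T; exact h
    rw [← e1, e2]
  obtain ⟨s₀, hs₀⟩ := hS
  by_cases hsingle : ∀ s ∈ S, s = s₀
  · -- S = {s₀} : then X * S = X * s₀ ≠ univ since T is nonempty
    obtain ⟨t, ht⟩ := Finset.card_pos.mp (hT ▸ hk)
    have : t * s₀ ∈ X * S := by rw [hcomp]; exact Set.mem_univ _
    obtain ⟨x₀, hx₀, s, hs, hmul⟩ := this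
    have : s = s₀ := hsingle s hs
    subst this
    have : x₀ = t := by
      have := mul_right_cancel hmul
      exact this
    exact hx₀.2 (this ▸ ht)
  · push_neg at hsingle
    obtain ⟨s₁, hs₁, hne⟩ := hsingle
    set A : Set G := {x | x ∈ X ∧ g x * s₀⁻¹ = x} with hAdef
    set B : Set G := {x | x ∈ X ∧ g x * s₀⁻¹ ∈ (T : Set G)} with hBdef
    have hcover : A ∪ B ∪ (T : Set G) = Set.univ := by
      ext z
      simp only [Set.mem_union, Set.mem_univ, iff_true]
      by_cases hz : z ∈ (T : Set G)
      · exact Or.inr hz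
      · have hzX : z ∈ X := ⟨Set.mem_univ _, hz⟩
        rcases hg z hzX s₀ hs₀ with h | h
        · exact Or.inl (Or.inr ⟨hzX, h⟩)
        · exact Or.inl (Or.inl ⟨hzX, h⟩)
    -- A injects into T via x ↦ x * (s₀ * s₁⁻¹)
    have hA : Cardinal.mk A ≤ (k : Cardinal) := by
      have hmap : ∀ a : A, (a : G) * (s₀ * s₁⁻¹) ∈ T := by
        rintro ⟨a, haX, hga⟩
        have hga' : g a = a * s₀ := mul_inv_eq_iff_eq_mul.mp hga
        have := hg a haX s₁ hs₁
        rw [hga'] at this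
        rcases this with h | h
        · simpa [mul_assoc] using h
        · exfalso
          simp only [Set.mem_singleton_iff] at h
          have : s₀ * s₁⁻¹ = 1 := by
            have h' : a * (s₀ * s₁⁻¹) = a * 1 := by
              rw [mul_one, ← mul_assoc]; exact h
            exact mul_left_cancel h'
          exact hne (by rwa [mul_inv_eq_one, eq_comm] at this)
      have hf : Function.Injective (fun a : A => (⟨(a : G) * (s₀ * s₁⁻¹), hmap a⟩ : T)) := by
        rintro ⟨a, ha⟩ ⟨b, hb⟩ hab
        simp only [Subtype.mk.injEq] at hab ⊢
        exact mul_right_cancel hab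
      calc Cardinal.mk A ≤ Cardinal.mk T := Cardinal.mk_le_of_injective hf
        _ = (k : Cardinal) := by rw [Cardinal.mk_coe_finset, hT]
    -- B injects into T via x ↦ g x * s₀⁻¹
    have hB : Cardinal.mk B ≤ (k : Cardinal) := by
      have hf : Function.Injective (fun b : B => (⟨g (b : G) * s₀⁻¹, b.2.2⟩ : T)) := by
        rintro ⟨a, haX, ha⟩ ⟨b, hbX, hb⟩ hab
        simp only [Subtype.mk.injEq] at hab ⊢
        have : g a = g b := mul_right_cancel hab
        exact hinj a haX b hbX this
      calc Cardinal.mk B ≤ Cardinal.mk T := Cardinal.mk_le_of_injective hf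
        _ = (k : Cardinal) := by rw [Cardinal.mk_coe_finset, hT]
    have hTc : Cardinal.mk (T : Set G) = (k : Cardinal) := by
      simp [Cardinal.mk_coe_finset, hT]
    have hbig : Cardinal.mk G ≤ (3 * k : Cardinal) := by
      have h1 : Cardinal.mk G = Cardinal.mk ↥(A ∪ B ∪ (T : Set G)) := by
        rw [hcover, Cardinal.mk_univ]
      have h2 : Cardinal.mk ↥(A ∪ B ∪ (T : Set G)) ≤
          Cardinal.mk A + Cardinal.mk B + Cardinal.mk (T : Set G) :=
        le_trans (Cardinal.mk_union_le _ _)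
          (add_le_add_left (Cardinal.mk_union_le _ _) _)
      have h3 : Cardinal.mk A + Cardinal.mk B + Cardinal.mk (T : Set G) ≤
          (k : Cardinal) + (k : Cardinal) + (k : Cardinal) := by
        exact add_le_add (add_le_add hA hB) hTc.le
      have h4 : (k : Cardinal) + (k : Cardinal) + (k : Cardinal) = (3 * k : Cardinal) := by
        ring
      rw [h1]
      exact h2.trans (h3.trans h4.le)
    have : (3 * k + 1 : Cardinal) ≤ (3 * k : Cardinal) := hG.trans hbig
    have hcast : ((3 * k + 1 : ℕ) : Cardinal) ≤ ((3 * k : ℕ) : Cardinal) := by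
      push_cast
      exact this
    have := Nat.cast_le.mp hcast
    omega
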